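/- Let G be a 3-connected graph, u a vertex of G, and v1, v2, v3 three distinct neighbours of u. Then G contains a subdivision of the 3-fan F_3 whose universal vertex is u and whose subdivided path visits v1, v2, v3 in this order (with v1, v2, v3 the branch vertices of the path). -/

import Mathlib

open SimpleGraph

/-- `x` is a (reflexive) ancestor of `y` in the tree `T` rooted at `r`,
expressed metrically: `x` lies on the unique `r`–`y` path. -/
def AncIn {V : Type*} (T : SimpleGraph V) (r x y : V) : Prop :=
  T.dist r x + T.dist x y = T.dist r y

/-- A tree-layout of `G`: a rooted tree on the vertex set of `G` such that the endpoints
of every edge of `G` are in ancestor-descendant relation. -/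
structure TreeLayout {V : Type*} (G : SimpleGraph V) where
  tree : SimpleGraph V
  isTree : tree.IsTree
  root : V
  layout : ∀ ⦃x y : V⦄, G.Adj x y → AncIn tree root x y ∨ AncIn tree root y x

namespace TreeLayout

variable {V : Type*} {G : SimpleGraph V}

/-- `x` is an ancestor of `y` (reflexively) in the tree-layout. -/
def Anc (L : TreeLayout G) (x y : V) : Prop := AncIn L.tree L.root x y

def StrictAnc (L : TreeLayout G) (x y : V) : Prop := L.Anc x y ∧ x ≠ y

/-- The bandwidth of the tree-layout is at most `k`: neighbours in `G` are at
tree-distance at most `k`. -/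
def BandwidthLE (L : TreeLayout G) (k : ℕ) : Prop :=
  ∀ ⦃x y : V⦄, G.Adj x y → L.tree.dist x y ≤ k

/-- The interval `[a,b]` of the tree-layout: vertices on the tree path from `a` to `b`
(for `a` an ancestor of `b`). -/
def interval (L : TreeLayout G) (a b : V) : Set V := {z : V | L.Anc a z ∧ L.Anc z b}

end TreeLayout

/-- Treebandwidth: the minimum bandwidth over tree-layouts of `G`. -/
noncomputable def treebandwidth {V : Type*} (G : SimpleGraph V) : ℕ :=
  sInf {k | ∃ L : TreeLayout G, L.BandwidthLE k}

/-- Treedepth: the minimum depth (number of vertices on a root-to-leaf path) of a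
tree-layout (elimination tree) of `G`. -/
noncomputable def treedepth {V : Type*} (G : SimpleGraph V) : ℕ :=
  sInf {k | ∃ L : TreeLayout G, ∀ v : V, L.tree.dist L.root v + 1 ≤ k}

/-- A tree-partition of `G`: a partition of `V(G)` indexed by the nodes of a tree such that
every edge of `G` has both ends in one part or in parts indexed by adjacent nodes. -/
structure TreePartition {V : Type*} (G : SimpleGraph V) where
  ι : Type
  tree : SimpleGraph ι
  isTree : tree.IsTree
  part : V → ι
  adj : ∀ ⦃x y : V⦄, G.Adj x y → part x = part y ∨ tree.Adj (part x) (part y)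

/-- Tree-partition-width: minimum over tree-partitions of the maximum part size. -/
noncomputable def treePartitionWidth {V : Type*} (G : SimpleGraph V) : ℕ :=
  sInf {k | ∃ P : TreePartition G, ∀ i : P.ι, {v : V | P.part v = i}.ncard ≤ k}

/-- The connected component of `v` in the subgraph of `G` induced by `S`. -/
def connCompIn {V : Type*} (G : SimpleGraph V) (S : Set V) (v : V) : Set V :=
  {w : V | ∃ (hv : v ∈ S) (hw : w ∈ S), (G.induce S).Reachable ⟨v, hv⟩ ⟨w, hw⟩}

/-- `RootedTreedepthLE G U S n` expresses `td(G[S], U) ≤ n` for the rooted treedepth: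
it is `0` when `S` misses `U`, and otherwise one may delete one vertex from each
connected component and recurse. -/
inductive RootedTreedepthLE {V : Type*} (G : SimpleGraph V) (U : Set V) : Set V → ℕ → Prop
  | base (S : Set V) (n : ℕ) (h : S ∩ U = ∅) : RootedTreedepthLE G U S n
  | step (S : Set V) (n : ℕ) (pick : ∀ v : V, v ∈ S → V)
      (hpick : ∀ (v : V) (hv : v ∈ S), pick v hv ∈ connCompIn G S v)
      (h : ∀ (v : V) (hv : v ∈ S),
        RootedTreedepthLE G U (connCompIn G S v \ {pick v hv}) n) :
      RootedTreedepthLE G U S (n + 1)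

/-- A `U`-rooted minor model of the path on `k` vertices in `G`. -/
structure RootedPathMinor {V : Type*} (G : SimpleGraph V) (U : Set V) (k : ℕ) where
  branch : Fin k → Set V
  connected : ∀ i, (G.induce (branch i)).Connected
  disjoint : ∀ i j, i ≠ j → Disjoint (branch i) (branch j)
  rooted : ∀ i, (branch i ∩ U).Nonempty
  adj : ∀ i j : Fin k, (j : ℕ) = (i : ℕ) + 1 → ∃ a ∈ branch i, ∃ b ∈ branch j, G.Adj a b

/-- A subdivision of the `k`-fan in `G` with universal (center) vertex `v`:
branch vertices `b 0, …, b (k-1)` of the path, internally disjoint spokes from `v`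
and internally disjoint path segments between consecutive branch vertices. -/
structure FanSubdivision {V : Type*} (G : SimpleGraph V) (v : V) (k : ℕ) where
  b : Fin k → V
  binj : Function.Injective b
  bne : ∀ i, b i ≠ v
  spoke : ∀ i : Fin k, G.Walk v (b i)
  spokePath : ∀ i, (spoke i).IsPath
  seg : ∀ (i : Fin k) (h : (i : ℕ) + 1 < k), G.Walk (b i) (b ⟨(i : ℕ) + 1, h⟩)
  segPath : ∀ i h, (seg i h).IsPath
  vNotinSeg : ∀ i h, v ∉ (seg i h).support
  spokeDisj : ∀ i j, i ≠ j →
    {x | x ∈ (spoke i).support} ∩ {x | x ∈ (spoke j).support} = {v}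
  spokeSegDisj : ∀ i j h,
    {x | x ∈ (spoke i).support} ∩ {x | x ∈ (seg j h).support} ⊆
      ({b i} : Set V) ∩ {b j, b ⟨(j : ℕ) + 1, h⟩}
  segDisj : ∀ i j hi hj, i ≠ j →
    {x | x ∈ (seg i hi).support} ∩ {x | x ∈ (seg j hj).support} ⊆
      ({b i, b ⟨(i : ℕ) + 1, hi⟩} : Set V) ∩ {b j, b ⟨(j : ℕ) + 1, hj⟩}

/-- A `p`-centered colouring: every (nonempty) connected induced subgraph either receives
more than `p` colours or has a uniquely coloured vertex. -/
def IsPCenteredColoring {V : Type*} (G : SimpleGraph V) (p : ℕ) (c : V → ℕ) : Prop :=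
  ∀ S : Set V, S.Nonempty → (G.induce S).Connected →
    p < (c '' S).ncard ∨ ∃ x ∈ S, ∀ y ∈ S, c y = c x → y = x

/-- Treewidth, characterised via tree-layouts: the minimum over tree-layouts of the maximum
over nodes `u` of the number of strict ancestors of `u` that are `G`-neighbours of some
descendant of `u` (including `u`). -/
noncomputable def treewidthTL {V : Type*} (G : SimpleGraph V) : ℕ :=
  sInf {k | ∃ L : TreeLayout G, ∀ u : V,
    {a : V | L.StrictAnc a u ∧ ∃ d : V, L.Anc u d ∧ G.Adj a d}.ncard ≤ k}

/-- The pruned subtree of `x` in a tree-layout: descendants of `x` (including `x`) having a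
neighbour of `x` among their own descendants. -/
def prunedSubtree {V : Type*} {G : SimpleGraph V} (L : TreeLayout G) (x : V) : Set V :=
  {y : V | L.Anc x y ∧ ∃ d : V, L.Anc y d ∧ G.Adj x d}

/-- Treespan: the minimum over tree-layouts of (maximum size of a pruned subtree minus one). -/
noncomputable def treespan {V : Type*} (G : SimpleGraph V) : ℕ :=
  sInf {k | ∃ L : TreeLayout G, ∀ x : V, (prunedSubtree L x).ncard ≤ k + 1}

/-- A tree decomposition of `G`. -/
structure TreeDecomp {V : Type*} (G : SimpleGraph V) where
  ι : Type
  tree : SimpleGraph ι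
  isTree : tree.IsTree
  bag : ι → Set V
  coverV : ∀ v : V, ∃ t, v ∈ bag t
  coverE : ∀ ⦃x y : V⦄, G.Adj x y → ∃ t, x ∈ bag t ∧ y ∈ bag t
  subtree : ∀ v : V, (tree.induce {t : ι | v ∈ bag t}).Connected

/-- Domino treewidth: minimum width over tree decompositions in which every vertex
belongs to at most two bags. -/
noncomputable def dominoTreewidth {V : Type*} (G : SimpleGraph V) : ℕ :=
  sInf {k | ∃ D : TreeDecomp G, (∀ v : V, {t : D.ι | v ∈ D.bag t}.ncard ≤ 2) ∧
    ∀ t : D.ι, (D.bag t).ncard ≤ k + 1}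

/-- Edge-treewidth via tree-layouts: the minimum over tree-layouts of the maximum over nodes
`u` of the number of edges with one endpoint a descendant of `u` (including `u`) and the other
a strict ancestor of `u`. -/
noncomputable def edgeTreewidth {V : Type*} (G : SimpleGraph V) : ℕ :=
  sInf {k | ∃ L : TreeLayout G, ∀ u : V,
    {p : V × V | L.StrictAnc p.1 u ∧ L.Anc u p.2 ∧ G.Adj p.1 p.2}.ncard ≤ k}

/-- `S` is a block (2-connected component) of `G`: a maximal connected set of vertices whose
induced subgraph has no cutvertex. -/
def IsBlock {V : Type*} (G : SimpleGraph V) (S : Set V) : Prop :=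
  S.Nonempty ∧ (G.induce S).Connected ∧
    (∀ x ∈ S, (G.induce (S \ {x})).Preconnected) ∧
    ∀ S' : Set V, S ⊆ S' → (G.induce S').Connected →
      (∀ x ∈ S', (G.induce (S' \ {x})).Preconnected) → S' = S

/-- Biconnected maximum degree: the maximum over blocks of `G` of the maximum degree
inside the block. -/
noncomputable def biconnMaxDegree {V : Type*} (G : SimpleGraph V) : ℕ :=
  sSup {d | ∃ (S : Set V) (v : V), IsBlock G S ∧ v ∈ S ∧ d = {w ∈ S | G.Adj v w}.ncard}

/-- `G` is 3-connected: more than 3 vertices, and removing any two vertices leaves it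
connected. -/
def ThreeConnected {V : Type*} (G : SimpleGraph V) : Prop :=
  3 < Nat.card V ∧ ∀ x y : V, (G.induce {v : V | v ≠ x ∧ v ≠ y}).Connected

/-- `G` has `H` as a minor (branch-set model). -/
def HasMinor {V W : Type*} (G : SimpleGraph V) (H : SimpleGraph W) : Prop :=
  ∃ B : W → Set V, (∀ w, (G.induce (B w)).Connected) ∧
    (∀ w w', w ≠ w' → Disjoint (B w) (B w')) ∧
    ∀ ⦃w w'⦄, H.Adj w w' → ∃ a ∈ B w, ∃ b ∈ B w', G.Adj a b

/-- Planarity via Wagner's theorem: no `K₅` minor and no `K₃,₃` minor. -/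
def PlanarWagner {V : Type*} (G : SimpleGraph V) : Prop :=
  ¬ HasMinor G (completeGraph (Fin 5)) ∧
    ¬ HasMinor G (completeBipartiteGraph (Fin 3) (Fin 3))

/-- A subdivision of the `k`-wheel in `G` with hub `v`. -/
structure WheelSubdivision {V : Type*} (G : SimpleGraph V) (v : V) (k : ℕ) where
  b : Fin k → V
  binj : Function.Injective b
  bne : ∀ i, b i ≠ v
  spoke : ∀ i : Fin k, G.Walk v (b i)
  spokePath : ∀ i, (spoke i).IsPath
  seg : ∀ i : Fin k, G.Walk (b i) (b (finRotate k i))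
  segPath : ∀ i, (seg i).IsPath
  vNotinSeg : ∀ i, v ∉ (seg i).support
  spokeDisj : ∀ i j, i ≠ j →
    {x | x ∈ (spoke i).support} ∩ {x | x ∈ (spoke j).support} = {v}
  spokeSegDisj : ∀ i j,
    {x | x ∈ (spoke i).support} ∩ {x | x ∈ (seg j).support} ⊆
      ({b i} : Set V) ∩ {b j, b (finRotate k j)}
  segDisj : ∀ i j, i ≠ j →
    {x | x ∈ (seg i).support} ∩ {x | x ∈ (seg j).support} ⊆
      ({b i, b (finRotate k i)} : Set V) ∩ {b j, b (finRotate k j)}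

/-- A subdivision of the `k`-dipole with poles `u`, `v`: `k` internally vertex-disjoint
`u`–`v` paths of length at least `2`. -/
structure DipoleSubdivision {V : Type*} (G : SimpleGraph V) (u v : V) (k : ℕ) where
  path : Fin k → G.Walk u v
  isPath : ∀ i, (path i).IsPath
  len : ∀ i, 2 ≤ (path i).length
  disj : ∀ i j, i ≠ j →
    {x | x ∈ (path i).support} ∩ {x | x ∈ (path j).support} = ({u, v} : Set V)

/-- A separation of `G`. -/
def IsSeparation {V : Type*} (G : SimpleGraph V) (A B : Set V) : Prop :=
  A ∪ B = Set.univ ∧ ∀ a ∈ A \ B, ∀ b ∈ B \ A, ¬ G.Adj a b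

/-- `μ(X,Y)`: the minimum order of a separation `(A,B)` with `X ⊆ A` and `Y ⊆ B`. -/
noncomputable def muSep {V : Type*} (G : SimpleGraph V) (X Y : Set V) : ℕ :=
  sInf {n | ∃ A B : Set V, IsSeparation G A B ∧ X ⊆ A ∧ Y ⊆ B ∧ (A ∩ B).ncard = n}

def IsMaximalClique {V : Type*} (G : SimpleGraph V) (K : Set V) : Prop :=
  G.IsClique K ∧ ∀ K' : Set V, G.IsClique K' → K ⊆ K' → K' = K

/-- `G` is proper chordal: it has a tree-layout in which every maximal clique is an
interval of a root-to-leaf path. -/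
def ProperChordal {V : Type*} (G : SimpleGraph V) : Prop :=
  ∃ L : TreeLayout G, ∀ K : Set V, IsMaximalClique G K →
    ∃ a b : V, L.Anc a b ∧ K = L.interval a b

/-- A topological-minor model (subdivision embedding) of `H` in `G`. -/
structure TopMinorEmbedding {W V : Type*} (H : SimpleGraph W) (G : SimpleGraph V) where
  φ : W → V
  inj : Function.Injective φ
  path : ∀ ⦃a b : W⦄, H.Adj a b → G.Walk (φ a) (φ b)
  isPath : ∀ ⦃a b : W⦄ (h : H.Adj a b), (path h).IsPath
  branchOnPath : ∀ ⦃a b : W⦄ (h : H.Adj a b) (w : W),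
    φ w ∈ (path h).support → w = a ∨ w = b
  disj : ∀ ⦃a b c d : W⦄ (hab : H.Adj a b) (hcd : H.Adj c d), s(a, b) ≠ s(c, d) →
    {x | x ∈ (path hab).support} ∩ {x | x ∈ (path hcd).support} ⊆
      ({φ a, φ b} : Set V) ∩ {φ c, φ d}

/-- A subdivision of the star `K_{1,s}` in `H` with all leaves in `X`. -/
structure StarSubdivision {V : Type*} (H : SimpleGraph V) (X : Set V) (s : ℕ) where
  center : V
  leaf : Fin s → V
  leafInj : Function.Injective leaf
  leafX : ∀ i, leaf i ∈ X
  leafNe : ∀ i, leaf i ≠ center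
  path : ∀ i : Fin s, H.Walk center (leaf i)
  isPath : ∀ i, (path i).IsPath
  disj : ∀ i j, i ≠ j →
    {x | x ∈ (path i).support} ∩ {x | x ∈ (path j).support} = {center}

/-- The weight `w(t,U)` of a set `U` at a node `t` of a tree decomposition is at most `a`:
`|β(t) ∩ U|` plus the number of a suitable family of adhesions incident to `t` whose union
hits all paths from `β(t)` to `U ∖ β(t)` is at most `a`. -/
def WeightLE {V : Type*} {G : SimpleGraph V} (D : TreeDecomp G) (U : Set V) (t : D.ι)
    (a : ℕ) : Prop :=
  ∃ F : Set D.ι, (∀ s ∈ F, D.tree.Adj t s) ∧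
    (D.bag t ∩ U).ncard + F.ncard ≤ a ∧
    ∀ ⦃x y : V⦄ (p : G.Walk x y), x ∈ D.bag t → y ∈ U \ D.bag t →
      ∃ z ∈ p.support, ∃ s ∈ F, z ∈ D.bag t ∩ D.bag s

/-- The graph obtained from `G` by subdividing the edge `xy` into a path with `n + 1`
new internal vertices. -/
def subdivideEdge {V : Type*} (G : SimpleGraph V) (x y : V) (n : ℕ) :
    SimpleGraph (V ⊕ Fin (n + 1)) :=
  SimpleGraph.fromRel (fun a b =>
    (∃ u w : V, a = Sum.inl u ∧ b = Sum.inl w ∧ G.Adj u w ∧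
      ¬(u = x ∧ w = y) ∧ ¬(u = y ∧ w = x)) ∨
    (a = Sum.inl x ∧ b = Sum.inr 0) ∨
    (∃ i : Fin n, a = Sum.inr i.castSucc ∧ b = Sum.inr i.succ) ∨
    (a = Sum.inr (Fin.last n) ∧ b = Sum.inl y))


section OrderedFanProof

set_option linter.unusedSectionVars false
set_option maxHeartbeats 1600000

namespace OFan
variable {V : Type*} [Fintype V] [DecidableEq V]

def MSep (G : SimpleGraph V) (A B S : Set V) : Prop :=
  ∀ ⦃a b : V⦄, a ∈ A → b ∈ B → ∀ w : G.Walk a b, ∃ z ∈ w.support, z ∈ S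

/-- Two support-disjoint `A`–`B` walks. -/
def MTwo (G : SimpleGraph V) (A B : Set V) : Prop :=
  ∃ (a₁ b₁ a₂ b₂ : V) (w₁ : G.Walk a₁ b₁) (w₂ : G.Walk a₂ b₂),
    a₁ ∈ A ∧ b₁ ∈ B ∧ a₂ ∈ A ∧ b₂ ∈ B ∧ ∀ z, z ∈ w₁.support → z ∉ w₂.support

lemma firstHit {G : SimpleGraph V} (X : Set V) {a b : V} (w : G.Walk a b)
    (h : ∃ z ∈ w.support, z ∈ X) :
    ∃ (c : V) (w' : G.Walk a c), c ∈ X ∧ (∀ z ∈ w'.support, z ∈ w.support) ∧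
      (∀ z ∈ w'.support, z ∈ X → z = c) := by
  classical
  induction w with
  | nil =>
    obtain ⟨z, hz, hzX⟩ := h
    simp only [Walk.support_nil, List.mem_singleton] at hz
    subst hz
    exact ⟨z, Walk.nil, hzX, by simp, by simp⟩
  | @cons a c b hadj p ih =>
    by_cases ha : a ∈ X
    · exact ⟨a, Walk.nil, ha, by simp, by simp⟩
    · have h' : ∃ z ∈ p.support, z ∈ X := by
        obtain ⟨z, hz, hzX⟩ := h
        rcases List.mem_cons.1 (by simpa [Walk.support_cons] using hz) with rfl | hz'
        · exact absurd hzX ha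
        · exact ⟨z, hz', hzX⟩
      obtain ⟨c', w', hc, hsub, honly⟩ := ih h'
      refine ⟨c', Walk.cons hadj w', hc, ?_, ?_⟩
      · intro z hz
        rcases List.mem_cons.1 (by simpa [Walk.support_cons] using hz) with rfl | hz'
        · simp
        · simp only [Walk.support_cons, List.mem_cons]
          exact Or.inr (hsub _ hz')
      · intro z hz hzX
        rcases List.mem_cons.1 (by simpa [Walk.support_cons] using hz) with rfl | hz'
        · exact absurd hzX ha
        · exact honly z hz' hzX


lemma end_not_mem_takeUntil {G : SimpleGraph V} {a c : V} {p : G.Walk a c}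
    (hp : p.IsPath) {z : V} (hz : z ∈ p.support) (hzc : z ≠ c) :
    c ∉ (p.takeUntil z hz).support := by
  intro hc
  have hnd := hp.support_nodup
  rw [← p.take_spec hz, Walk.support_append] at hnd
  have hdisj := List.disjoint_of_nodup_append hnd
  have hcd : c ∈ (p.dropUntil z hz).support := Walk.end_mem_support _
  rw [Walk.support_eq_cons] at hcd
  rcases List.mem_cons.1 hcd with rfl | htl
  · exact hzc rfl
  · exact hdisj hc htl

lemma start_not_mem_dropUntil {G : SimpleGraph V} {f b : V} {q : G.Walk f b}
    (hq : q.IsPath) {z : V} (hz : z ∈ q.support) (hzf : z ≠ f) :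
    f ∉ (q.dropUntil z hz).support := by
  intro hc
  have hnd := hq.support_nodup
  rw [← q.take_spec hz, Walk.support_append] at hnd
  have hdisj := List.disjoint_of_nodup_append hnd
  rw [Walk.support_eq_cons] at hc
  rcases List.mem_cons.1 hc with rfl | htl
  · exact hzf rfl
  · exact hdisj (Walk.start_mem_support _) htl

lemma mtwo_of_no_edges {G : SimpleGraph V} {A B : Set V} (hE : G.edgeSet = ∅)
    (hsep : ∀ S : Set V, MSep G A B S → 2 ≤ S.ncard) : MTwo G A B := by
  have hAB : 2 ≤ (A ∩ B).ncard := by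
    apply hsep
    intro a b ha hb w
    cases w with
    | nil => exact ⟨a, by simp, ha, hb⟩
    | cons hadj p =>
      exact absurd (G.mem_edgeSet.2 hadj) (by simp [hE])
  have h2 : 1 < (A ∩ B).ncard := hAB
  rw [Set.one_lt_ncard_iff (A ∩ B).toFinite] at h2
  obtain ⟨a, b, ha, hb, hab⟩ := h2
  exact ⟨a, a, b, b, Walk.nil, Walk.nil, ha.1, ha.2, hb.1, hb.2, by
    intro z hz hz'
    simp only [Walk.support_nil, List.mem_singleton] at hz hz'
    exact hab (hz ▸ hz' ▸ rfl)⟩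

lemma transfer_of_avoid {G : SimpleGraph V} {x y : V} {a c : V}
    (w : G.Walk a c) (h : x ∉ w.support ∨ y ∉ w.support) :
    ∃ w₁ : (G.deleteEdges {s(x,y)}).Walk a c, w₁.support = w.support := by
  refine ⟨w.transfer _ ?_, Walk.support_transfer _ _⟩
  intro e heE
  rw [edgeSet_deleteEdges]
  refine ⟨w.edges_subset_edgeSet heE, ?_⟩
  simp only [Set.mem_singleton_iff]
  rintro rfl
  cases h with
  | inl hx => exact hx (w.fst_mem_support_of_mem_edges heE)
  | inr hy => exact hy (w.snd_mem_support_of_mem_edges heE)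


lemma glueFinish {G G₁ : SimpleGraph V} {A B X : Set V}
    (hXY : MSep G A B X) (hle : G₁ ≤ G)
    {a₁ a₂ b₁ b₂ d₁ d₂ : V} (hd : d₁ ≠ d₂)
    (ha₁ : a₁ ∈ A) (ha₂ : a₂ ∈ A) (hb₁ : b₁ ∈ B) (hb₂ : b₂ ∈ B)
    (hd₁X : d₁ ∈ X) (hd₂X : d₂ ∈ X)
    (p₁ : G₁.Walk a₁ d₁) (p₂ : G₁.Walk a₂ d₂) (q₁ : G₁.Walk d₁ b₁) (q₂ : G₁.Walk d₂ b₂)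
    (hp₁ : p₁.IsPath) (hp₂ : p₂.IsPath) (hq₁ : q₁.IsPath) (hq₂ : q₂.IsPath)
    (hp₁X : ∀ z ∈ p₁.support, z ∈ X → z = d₁) (hp₂X : ∀ z ∈ p₂.support, z ∈ X → z = d₂)
    (hq₁X : ∀ z ∈ q₁.support, z ∈ X → z = d₁) (hq₂X : ∀ z ∈ q₂.support, z ∈ X → z = d₂)
    (hpdisj : ∀ z, z ∈ p₁.support → z ∉ p₂.support)
    (hqdisj : ∀ z, z ∈ q₁.support → z ∉ q₂.support) :
    MTwo G A B := by
  have hsub : ∀ ⦃u v : V⦄ (w : G₁.Walk u v), ∀ e ∈ w.edges, e ∈ G.edgeSet :=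
    fun u v w e he => edgeSet_mono hle (w.edges_subset_edgeSet he)
  have cross : ∀ {a d f b : V} (p : G₁.Walk a d) (q : G₁.Walk f b), a ∈ A → b ∈ B →
      p.IsPath → q.IsPath → (∀ z ∈ p.support, z ∈ X → z = d) →
      (∀ z ∈ q.support, z ∈ X → z = f) →
      d ∈ X → f ∈ X → ∀ z, z ∈ p.support → z ∈ q.support → z ∈ X := by
    intro a d f b p q ha hb hp hq hpX hqX hdX hfX z hzp hzq
    by_contra hzX
    have hzd : z ≠ d := fun h => hzX (h ▸ hdX)
    have hzf : z ≠ f := fun h => hzX (h ▸ hfX)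
    have hdT := end_not_mem_takeUntil hp hzp hzd
    have hfD := start_not_mem_dropUntil hq hzq hzf
    set W := (p.takeUntil z hzp).append (q.dropUntil z hzq) with hW
    have hWX : ∀ w ∈ W.support, w ∉ X := by
      intro w hw
      rw [hW, Walk.mem_support_append_iff] at hw
      rcases hw with hw | hw
      · intro hwX
        have hwd := hpX w (p.support_takeUntil_subset hzp hw) hwX
        exact hdT (hwd ▸ hw)
      · intro hwX
        have hwf := hqX w (q.support_dropUntil_subset hzq hw) hwX
        exact hfD (hwf ▸ hw)
    obtain ⟨z', hz', hz'X⟩ := hXY ha hb (W.transfer G (hsub W))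
    rw [Walk.support_transfer] at hz'
    exact hWX z' hz' hz'X
  refine ⟨a₁, b₁, a₂, b₂, (p₁.append q₁).transfer G (hsub _),
    (p₂.append q₂).transfer G (hsub _), ha₁, hb₁, ha₂, hb₂, ?_⟩
  intro z hz1 hz2
  rw [Walk.support_transfer, Walk.mem_support_append_iff] at hz1 hz2
  rcases hz1 with h1 | h1 <;> rcases hz2 with h2 | h2
  · exact hpdisj z h1 h2
  · have hzX := cross p₁ q₂ ha₁ hb₂ hp₁ hq₂ hp₁X hq₂X hd₁X hd₂X z h1 h2
    exact hd ((hp₁X z h1 hzX) ▸ (hq₂X z h2 hzX) ▸ rfl)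
  · have hzX := cross p₂ q₁ ha₂ hb₁ hp₂ hq₁ hp₂X hq₁X hd₂X hd₁X z h2 h1
    exact hd ((hq₁X z h1 hzX) ▸ (hp₂X z h2 hzX) ▸ rfl)
  · exact hqdisj z h1 h2


def cf (x y z : V) : V := if z = y then x else z

def contractG (G : SimpleGraph V) (x y : V) : SimpleGraph V :=
  SimpleGraph.fromRel (fun a b => a ≠ y ∧ b ≠ y ∧ ∃ p q, G.Adj p q ∧ cf x y p = a ∧ cf x y q = b)

lemma cf_ne_y {x y : V} (hxy : x ≠ y) (z : V) : cf x y z ≠ y := by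
  unfold cf; split
  · exact hxy
  · assumption

lemma cf_eq_self {x y z : V} (h : z ≠ y) : cf x y z = z := if_neg h

lemma cf_y {x y : V} : cf x y y = x := if_pos rfl

lemma contract_adj {G : SimpleGraph V} {x y : V} {a b : V} :
    (contractG G x y).Adj a b ↔ a ≠ b ∧ a ≠ y ∧ b ≠ y ∧
      (G.Adj a b ∨ (a = x ∧ G.Adj y b) ∨ (b = x ∧ G.Adj a y)) := by
  unfold contractG
  rw [fromRel_adj]
  constructor
  · rintro ⟨hab, ⟨hay, hby, p, q, hpq, hp, hq⟩ | ⟨hby, hay, p, q, hpq, hp, hq⟩⟩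
    · refine ⟨hab, hay, hby, ?_⟩
      by_cases hpy : p = y <;> by_cases hqy : q = y
      · rw [hpy, hqy] at hpq; exact absurd hpq (G.loopless.irrefl y)
      · rw [hpy, cf_y] at hp; rw [cf_eq_self hqy] at hq
        refine Or.inr (Or.inl ⟨hp.symm, ?_⟩)
        rw [← hq, ← hpy]; exact hpq
      · rw [hqy, cf_y] at hq; rw [cf_eq_self hpy] at hp
        refine Or.inr (Or.inr ⟨hq.symm, ?_⟩)
        rw [← hp, ← hqy]; exact hpq
      · rw [cf_eq_self hpy] at hp; rw [cf_eq_self hqy] at hq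
        refine Or.inl ?_
        rw [← hp, ← hq]; exact hpq
    · refine ⟨hab, hay, hby, ?_⟩
      by_cases hpy : p = y <;> by_cases hqy : q = y
      · rw [hpy, hqy] at hpq; exact absurd hpq (G.loopless.irrefl y)
      · rw [hpy, cf_y] at hp; rw [cf_eq_self hqy] at hq
        refine Or.inr (Or.inr ⟨hp.symm, ?_⟩)
        rw [← hq, ← hpy]; exact hpq.symm
      · rw [hqy, cf_y] at hq; rw [cf_eq_self hpy] at hp
        refine Or.inr (Or.inl ⟨hq.symm, ?_⟩)
        rw [← hp, ← hqy]; exact hpq.symm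
      · rw [cf_eq_self hpy] at hp; rw [cf_eq_self hqy] at hq
        refine Or.inl ?_
        rw [← hp, ← hq]; exact hpq.symm
  · rintro ⟨hab, hay, hby, hG | ⟨rfl, hyb⟩ | ⟨rfl, hay'⟩⟩
    · exact ⟨hab, Or.inl ⟨hay, hby, a, b, hG, cf_eq_self hay, cf_eq_self hby⟩⟩
    · exact ⟨hab, Or.inl ⟨hay, hby, y, b, hyb, cf_y, cf_eq_self hby⟩⟩
    · exact ⟨hab, Or.inl ⟨hay, hby, a, y, hay', cf_eq_self hay, cf_y⟩⟩

lemma contract_support_ne_y {G : SimpleGraph V} {x y : V} :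
    ∀ {a b : V} (w : (contractG G x y).Walk a b), a ≠ y → ∀ z ∈ w.support, z ≠ y := by
  intro a b w
  induction w with
  | nil => intro ha z hz; simp only [Walk.support_nil, List.mem_singleton] at hz; exact hz ▸ ha
  | @cons a c b hadj p ih =>
    intro ha z hz
    rcases List.mem_cons.1 (by simpa [Walk.support_cons] using hz) with rfl | hz'
    · exact ha
    · exact ih (contract_adj.1 hadj).2.2.1 z hz'

lemma projWalk {G : SimpleGraph V} {x y : V} (hxy : G.Adj x y) :
    ∀ {a b : V} (w : G.Walk a b),
      ∃ w' : (contractG G x y).Walk (cf x y a) (cf x y b),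
        ∀ z ∈ w'.support, ∃ t ∈ w.support, cf x y t = z := by
  intro a b w
  induction w with
  | nil =>
    refine ⟨Walk.nil, ?_⟩
    intro z hz
    simp only [Walk.support_nil, List.mem_singleton] at hz
    exact ⟨_, by simp, hz.symm⟩
  | @cons a c b hadj p ih =>
    obtain ⟨w'', hw''⟩ := ih
    by_cases hfc : cf x y a = cf x y c
    · refine ⟨w''.copy hfc.symm rfl, ?_⟩
      intro z hz
      rw [Walk.support_copy] at hz
      obtain ⟨t, ht, hft⟩ := hw'' z hz
      exact ⟨t, by simp [Walk.support_cons, ht], hft⟩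
    · have hadj' : (contractG G x y).Adj (cf x y a) (cf x y c) := by
        exact ⟨hfc, Or.inl ⟨cf_ne_y hxy.ne a, cf_ne_y hxy.ne c, a, c, hadj, rfl, rfl⟩⟩
      refine ⟨Walk.cons hadj' w'', ?_⟩
      intro z hz
      rcases List.mem_cons.1 (by simpa [Walk.support_cons] using hz) with rfl | hz'
      · exact ⟨a, by simp, rfl⟩
      · obtain ⟨t, ht, hft⟩ := hw'' z hz'
        exact ⟨t, by simp [Walk.support_cons, ht], hft⟩

lemma liftWalk {G : SimpleGraph V} {x y : V} (hxy : G.Adj x y) :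
    ∀ {a b : V} (w' : (contractG G x y).Walk a b),
      ∃ w : G.Walk a b, ∀ z ∈ w.support, z ∈ w'.support ∨ (z = y ∧ x ∈ w'.support) := by
  intro a b w'
  induction w' with
  | nil => exact ⟨Walk.nil, fun z hz => Or.inl hz⟩
  | @cons a c b hadj p ih =>
    obtain ⟨w, hw⟩ := ih
    have hmem : ∀ z ∈ w.support, z ∈ (Walk.cons hadj p).support ∨
        (z = y ∧ x ∈ (Walk.cons hadj p).support) := by
      intro z hz
      rcases hw z hz with h | ⟨rfl, hx⟩
      · exact Or.inl (by simp [Walk.support_cons, h])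
      · exact Or.inr ⟨rfl, by simp [Walk.support_cons, hx]⟩
    rcases contract_adj.1 hadj with ⟨hab, hay, hcy, hG | ⟨rfl, hyb⟩ | ⟨rfl, hay'⟩⟩
    · refine ⟨Walk.cons hG w, ?_⟩
      intro z hz
      rcases List.mem_cons.1 (by simpa [Walk.support_cons] using hz) with rfl | hz'
      · exact Or.inl (by simp [Walk.support_cons])
      · exact hmem z hz'
    · refine ⟨Walk.cons hxy (Walk.cons hyb w), ?_⟩
      intro z hz
      simp only [Walk.support_cons, List.mem_cons] at hz
      rcases hz with rfl | rfl | hz'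
      · exact Or.inl (by simp [Walk.support_cons])
      · exact Or.inr ⟨rfl, by simp [Walk.support_cons]⟩
      · exact hmem z hz'
    · refine ⟨Walk.cons hay' (Walk.cons hxy.symm w), ?_⟩
      intro z hz
      simp only [Walk.support_cons, List.mem_cons] at hz
      rcases hz with rfl | rfl | hz'
      · exact Or.inl (by simp [Walk.support_cons])
      · exact Or.inr ⟨rfl, by simp [Walk.support_cons]⟩
      · exact hmem z hz'

lemma fixEnds {G : SimpleGraph V} {x y : V} (hxy : G.Adj x y) {α β : V}
    (u : G.Walk (cf x y α) (cf x y β)) :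
    ∃ w : G.Walk α β, ∀ z ∈ w.support, z ∈ u.support ∨ (z = y ∧ x ∈ u.support) := by
  by_cases hα : α = y <;> by_cases hβ : β = y
  · have e1 : cf x y α = x := by rw [hα, cf_y]
    have e2 : cf x y β = x := by rw [hβ, cf_y]
    have hx : x ∈ u.support := by
      have h := (u.copy e1 e2).start_mem_support; rwa [Walk.support_copy] at h
    refine ⟨(Walk.cons hxy.symm ((u.copy e1 e2).concat hxy)).copy hα.symm hβ.symm, ?_⟩
    intro z hz
    simp only [Walk.support_copy, Walk.support_cons, Walk.support_concat,
      List.concat_eq_append, List.mem_cons, List.mem_append, List.mem_singleton,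
      List.not_mem_nil, or_false] at hz
    rcases hz with rfl | hz' | rfl
    · exact Or.inr ⟨rfl, hx⟩
    · exact Or.inl hz'
    · exact Or.inr ⟨rfl, hx⟩
  · have e1 : cf x y α = x := by rw [hα, cf_y]
    have hx : x ∈ u.support := by
      have h := (u.copy e1 rfl).start_mem_support; rwa [Walk.support_copy] at h
    refine ⟨(Walk.cons hxy.symm (u.copy e1 (cf_eq_self hβ))).copy hα.symm rfl, ?_⟩
    intro z hz
    simp only [Walk.support_copy, Walk.support_cons, List.mem_cons] at hz
    rcases hz with rfl | hz'
    · exact Or.inr ⟨rfl, hx⟩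
    · exact Or.inl hz'
  · have e2 : cf x y β = x := by rw [hβ, cf_y]
    have hx : x ∈ u.support := by
      have h := (u.copy rfl e2).end_mem_support; rwa [Walk.support_copy] at h
    refine ⟨((u.copy (cf_eq_self hα) e2).concat hxy).copy rfl hβ.symm, ?_⟩
    intro z hz
    simp only [Walk.support_copy, Walk.support_concat, List.concat_eq_append,
      List.mem_append, List.mem_singleton, List.mem_cons, List.not_mem_nil, or_false] at hz
    rcases hz with hz' | rfl
    · exact Or.inl hz'
    · exact Or.inr ⟨rfl, hx⟩
  · exact ⟨u.copy (cf_eq_self hα) (cf_eq_self hβ), fun z hz => Or.inl (by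
      rwa [Walk.support_copy] at hz)⟩


open scoped Classical in
noncomputable def Fmap (G : SimpleGraph V) (x y : V) : Sym2 V → Sym2 V := fun m =>
  if m ∈ G.edgeSet then m else Sym2.map (fun z => if z = x then y else z) m

lemma Fmap_pos {G : SimpleGraph V} {x y : V} {m : Sym2 V} (h : m ∈ G.edgeSet) :
    Fmap G x y m = m := by
  unfold Fmap; rw [if_pos h]

lemma Fmap_virt {G : SimpleGraph V} {x y : V} {b : V} (hbx : b ≠ x)
    (h : s(x,b) ∉ G.edgeSet) : Fmap G x y s(x,b) = s(y,b) := by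
  unfold Fmap
  rw [if_neg h, Sym2.map_pair_eq, if_pos rfl, if_neg hbx]

lemma contract_edge_cases {G : SimpleGraph V} {x y : V} :
    ∀ m ∈ (contractG G x y).edgeSet, (m ∈ G.edgeSet ∧ y ∉ m) ∨
      (∃ b, b ≠ x ∧ b ≠ y ∧ m = s(x,b) ∧ m ∉ G.edgeSet ∧ s(y,b) ∈ G.edgeSet) := by
  intro m
  induction m using Sym2.ind with
  | _ a b =>
    intro hm
    rw [mem_edgeSet, contract_adj] at hm
    obtain ⟨hab, hay, hby, tri⟩ := hm
    by_cases hG : G.Adj a b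
    · exact Or.inl ⟨hG, by
        rw [Sym2.mem_iff]
        rintro (rfl | rfl)
        · exact hay rfl
        · exact hby rfl⟩
    · rcases tri with h | ⟨rfl, hyb⟩ | ⟨rfl, hay'⟩
      · exact absurd h hG
      · exact Or.inr ⟨b, fun h => hab h.symm, hby, rfl, fun h => hG (G.mem_edgeSet.1 h), hyb⟩
      · refine Or.inr ⟨a, fun h => hab h, hay, Sym2.eq_swap, ?_, G.mem_edgeSet.2 hay'.symm⟩
        rw [mem_edgeSet]
        exact fun h => hG h

lemma contract_edge_lt {G : SimpleGraph V} {x y : V} (hxy : G.Adj x y) :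
    (contractG G x y).edgeSet.ncard < G.edgeSet.ncard := by
  have hmaps : ∀ m ∈ (contractG G x y).edgeSet, Fmap G x y m ∈ G.edgeSet \ {s(x, y)} := by
    intro m hm
    rcases contract_edge_cases m hm with ⟨hmE, hym⟩ | ⟨b, hbx, hby, rfl, hnm, hyb⟩
    · rw [Fmap_pos hmE]
      refine ⟨hmE, ?_⟩
      simp only [Set.mem_singleton_iff]
      intro h
      exact hym (h ▸ (Sym2.mem_iff.2 (Or.inr rfl)))
    · rw [Fmap_virt hbx hnm]
      refine ⟨hyb, ?_⟩
      simp only [Set.mem_singleton_iff, Sym2.eq_iff]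
      rintro (⟨h1, h2⟩ | ⟨h1, h2⟩)
      · exact hby h2
      · exact hbx h2
  have hinj : Set.InjOn (Fmap G x y) (contractG G x y).edgeSet := by
    intro m₁ hm₁ m₂ hm₂ hFeq
    rcases contract_edge_cases m₁ hm₁ with ⟨hE₁, hy₁⟩ | ⟨b₁, hbx₁, hby₁, rfl, hn₁, hyb₁⟩ <;>
      rcases contract_edge_cases m₂ hm₂ with ⟨hE₂, hy₂⟩ | ⟨b₂, hbx₂, hby₂, rfl, hn₂, hyb₂⟩
    · rwa [Fmap_pos hE₁, Fmap_pos hE₂] at hFeq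
    · rw [Fmap_pos hE₁, Fmap_virt hbx₂ hn₂] at hFeq
      exact absurd (hFeq ▸ (Sym2.mem_iff.2 (Or.inl rfl)) : y ∈ m₁) hy₁
    · rw [Fmap_pos hE₂, Fmap_virt hbx₁ hn₁] at hFeq
      exact absurd (hFeq.symm ▸ (Sym2.mem_iff.2 (Or.inl rfl)) : y ∈ m₂) hy₂
    · rw [Fmap_virt hbx₁ hn₁, Fmap_virt hbx₂ hn₂] at hFeq
      rw [Sym2.eq_iff] at hFeq
      rcases hFeq with ⟨-, rfl⟩ | ⟨h1, h2⟩
      · rfl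
      · exact absurd h2 hby₁
  have h1 : (contractG G x y).edgeSet.ncard ≤ (G.edgeSet \ {s(x,y)}).ncard :=
    Set.ncard_le_ncard_of_injOn (Fmap G x y) hmaps hinj (Set.toFinite _)
  have h2 : (G.edgeSet \ {s(x,y)}).ncard = G.edgeSet.ncard - 1 :=
    Set.ncard_diff_singleton_of_mem (G.mem_edgeSet.2 hxy)
  have h3 : 0 < G.edgeSet.ncard := by
    rw [Set.ncard_pos (Set.toFinite _)]
    exact ⟨s(x,y), G.mem_edgeSet.2 hxy⟩
  omega


lemma pair_match {x y d₁ d₂ e₁ e₂ : V} (hd₁ : d₁ = x ∨ d₁ = y) (hd₂ : d₂ = x ∨ d₂ = y)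
    (he₁ : e₁ = x ∨ e₁ = y) (he₂ : e₂ = x ∨ e₂ = y) (hd : d₁ ≠ d₂) (he : e₁ ≠ e₂) :
    (e₁ = d₁ ∧ e₂ = d₂) ∨ (e₁ = d₂ ∧ e₂ = d₁) := by
  rcases hd₁ with h1|h1 <;> rcases hd₂ with h2|h2 <;> rcases he₁ with h3|h3 <;>
    rcases he₂ with h4|h4 <;> subst h1 <;> subst h2 <;> subst h3 <;> subst h4 <;> tauto

lemma pathTrunc {G : SimpleGraph V} (X : Set V) {a c : V} (w : G.Walk a c) (hc : c ∈ X) :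
    ∃ (d : V) (p : G.Walk a d), d ∈ X ∧ p.IsPath ∧ (∀ z ∈ p.support, z ∈ w.support) ∧
      (∀ z ∈ p.support, z ∈ X → z = d) := by
  obtain ⟨d, w', hd, hsub, honly⟩ := firstHit X w ⟨c, w.end_mem_support, hc⟩
  exact ⟨d, w'.bypass, hd, w'.bypass_isPath, fun z hz => hsub z (w'.support_bypass_subset hz),
    fun z hz => honly z (w'.support_bypass_subset hz)⟩

lemma pathTruncRev {G : SimpleGraph V} (X : Set V) {f b : V} (w : G.Walk f b) (hf : f ∈ X) :
    ∃ (d : V) (q : G.Walk d b), d ∈ X ∧ q.IsPath ∧ (∀ z ∈ q.support, z ∈ w.support) ∧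
      (∀ z ∈ q.support, z ∈ X → z = d) := by
  obtain ⟨d, p, hd, hp, hsub, honly⟩ := pathTrunc X w.reverse (by
    simpa using hf)
  refine ⟨d, p.reverse, hd, hp.reverse, ?_, ?_⟩
  · intro z hz
    have h1 : z ∈ p.support := by rwa [Walk.support_reverse, List.mem_reverse] at hz
    have h2 := hsub z h1
    rwa [Walk.support_reverse, List.mem_reverse] at h2
  · intro z hz
    exact honly z (by rwa [Walk.support_reverse, List.mem_reverse] at hz)

lemma menger2 : ∀ (N : ℕ) (G : SimpleGraph V) (A B : Set V),
    G.edgeSet.ncard ≤ N → (∀ S : Set V, MSep G A B S → 2 ≤ S.ncard) → MTwo G A B := by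
  intro N
  induction N with
  | zero =>
    intro G A B hN hsep
    refine mtwo_of_no_edges ?_ hsep
    have h0 : G.edgeSet.ncard = 0 := Nat.le_antisymm hN (Nat.zero_le _)
    rwa [Set.ncard_eq_zero (Set.toFinite _)] at h0
  | succ N ih =>
    intro G A B hN hsep
    by_cases hE : G.edgeSet = ∅
    · exact mtwo_of_no_edges hE hsep
    · obtain ⟨e, he⟩ := Set.nonempty_iff_ne_empty.2 hE
      obtain ⟨x, y, hxyE⟩ : ∃ x y, s(x,y) ∈ G.edgeSet := by
        revert he; exact Sym2.ind (fun x y he => ⟨x, y, he⟩) e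
      have hxy : G.Adj x y := G.mem_edgeSet.1 hxyE
      by_cases hXY : MSep G A B {x, y}
      · -- GLUE case
        have hE₁ : (G.deleteEdges {s(x,y)}).edgeSet.ncard ≤ N := by
          rw [edgeSet_deleteEdges]
          have h2 := Set.ncard_diff_singleton_of_mem hxyE
          have h3 : 0 < G.edgeSet.ncard := by
            rw [Set.ncard_pos (Set.toFinite _)]; exact ⟨_, hxyE⟩
          omega
        have toG₁ : ∀ {a c : V} (w : G.Walk a c), (∀ z ∈ w.support, z ∈ ({x,y} : Set V) → z = c) →
            c ∈ ({x,y} : Set V) →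
            ∃ w₁ : (G.deleteEdges {s(x,y)}).Walk a c, w₁.support = w.support := by
          intro a c w honly hcX
          apply transfer_of_avoid
          rcases (show c = x ∨ c = y by simpa using hcX) with rfl | rfl
          · right; intro hy
            exact hxy.ne (honly y hy (by simp)).symm
          · left; intro hx
            exact hxy.ne (honly x hx (by simp))
        have SA : ∀ T : Set V, MSep (G.deleteEdges {s(x,y)}) A {x,y} T → 2 ≤ T.ncard := by
          intro T hT
          apply hsep T
          intro a b ha hb w
          obtain ⟨c, w', hcX, hsub, honly⟩ := firstHit {x,y} w (hXY ha hb w)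
          obtain ⟨w₁, hw₁⟩ := toG₁ w' honly hcX
          obtain ⟨z, hz, hzT⟩ := hT ha hcX w₁
          exact ⟨z, hsub z (hw₁ ▸ hz), hzT⟩
        have SB : ∀ T : Set V, MSep (G.deleteEdges {s(x,y)}) ({x,y} : Set V) B T → 2 ≤ T.ncard := by
          intro T hT
          apply hsep T
          intro a b ha hb w
          have hrev : ∃ z ∈ w.reverse.support, z ∈ ({x,y} : Set V) := by
            obtain ⟨z, hz, hzX⟩ := hXY ha hb w
            exact ⟨z, by simpa [Walk.support_reverse] using hz, hzX⟩
          obtain ⟨c, w', hcX, hsub, honly⟩ := firstHit {x,y} w.reverse hrev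
          obtain ⟨w₁, hw₁⟩ := toG₁ w' honly hcX
          obtain ⟨z, hz, hzT⟩ := hT hcX hb w₁.reverse
          have hz' : z ∈ w'.support := by
            rw [Walk.support_reverse, List.mem_reverse, hw₁] at hz; exact hz
          have h2 := hsub z hz'
          rw [Walk.support_reverse, List.mem_reverse] at h2
          exact ⟨z, h2, hzT⟩
        obtain ⟨a₁, c₁, a₂, c₂, u₁, u₂, ha₁, hc₁, ha₂, hc₂, hudisj⟩ := ih _ A {x,y} hE₁ SA
        obtain ⟨f₁, b₁, f₂, b₂, r₁, r₂, hf₁, hb₁, hf₂, hb₂, hrdisj⟩ := ih _ ({x,y} : Set V) B hE₁ SB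
        obtain ⟨d₁, p₁, hd₁, hp₁, hp₁sub, hp₁X⟩ := pathTrunc {x,y} u₁ hc₁
        obtain ⟨d₂, p₂, hd₂, hp₂, hp₂sub, hp₂X⟩ := pathTrunc {x,y} u₂ hc₂
        obtain ⟨e₁, q₁, he₁, hq₁, hq₁sub, hq₁X⟩ := pathTruncRev {x,y} r₁ hf₁
        obtain ⟨e₂, q₂, he₂, hq₂, hq₂sub, hq₂X⟩ := pathTruncRev {x,y} r₂ hf₂
        have hd12 : d₁ ≠ d₂ := by
          intro h
          exact hudisj d₁ (hp₁sub d₁ p₁.end_mem_support)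
            (by rw [h]; exact hp₂sub d₂ p₂.end_mem_support)
        have he12 : e₁ ≠ e₂ := by
          intro h
          exact hrdisj e₁ (hq₁sub e₁ q₁.start_mem_support)
            (by rw [h]; exact hq₂sub e₂ q₂.start_mem_support)
        have hmatch : (e₁ = d₁ ∧ e₂ = d₂) ∨ (e₁ = d₂ ∧ e₂ = d₁) := by
          exact pair_match (x := x) (y := y) (by simpa using hd₁) (by simpa using hd₂)
            (by simpa using he₁) (by simpa using he₂) hd12 he12
        rcases hmatch with ⟨h1, h2⟩ | ⟨h1, h2⟩
        · subst h1; subst h2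
          exact glueFinish hXY (deleteEdges_le _) hd12 ha₁ ha₂ hb₁ hb₂ hd₁ hd₂ p₁ p₂ q₁ q₂
            hp₁ hp₂ hq₁ hq₂ hp₁X hp₂X hq₁X hq₂X
            (fun z hz hz2 => hudisj z (hp₁sub z hz) (hp₂sub z hz2))
            (fun z hz hz2 => hrdisj z (hq₁sub z hz) (hq₂sub z hz2))
        · subst h1; subst h2
          exact glueFinish hXY (deleteEdges_le _) hd12 ha₁ ha₂ hb₂ hb₁ hd₁ hd₂ p₁ p₂ q₂ q₁
            hp₁ hp₂ hq₂ hq₁ hp₁X hp₂X hq₂X hq₁X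
            (fun z hz hz2 => hudisj z (hp₁sub z hz) (hp₂sub z hz2))
            (fun z hz hz2 => hrdisj z (hq₁sub z hz2) (hq₂sub z hz))
      · -- CONTRACT case
        have hE' : (contractG G x y).edgeSet.ncard ≤ N := by
          have := contract_edge_lt hxy; omega
        have hsep' : ∀ T' : Set V,
            MSep (contractG G x y) (cf x y '' A) (cf x y '' B) T' → 2 ≤ T'.ncard := by
          intro T' hT'
          have hT : MSep (contractG G x y) (cf x y '' A) (cf x y '' B) (T' \ {y}) := by
            intro a b ha hb w
            obtain ⟨z, hz, hzT⟩ := hT' ha hb w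
            refine ⟨z, hz, hzT, ?_⟩
            simp only [Set.mem_singleton_iff]
            obtain ⟨α, hα, rfl⟩ := ha
            exact contract_support_ne_y w (cf_ne_y hxy.ne α) z hz
          have hcard : 2 ≤ (T' \ {y}).ncard → 2 ≤ T'.ncard := fun h =>
            le_trans h (Set.ncard_le_ncard Set.diff_subset (Set.toFinite _))
          by_cases hxT : x ∈ T' \ {y}
          · by_cases hT1 : T' \ {y} ⊆ {x}
            · exfalso
              apply hXY
              intro a b ha hb w
              obtain ⟨w', hw'⟩ := projWalk hxy w
              obtain ⟨z, hz, hzT⟩ := hT ⟨a, ha, rfl⟩ ⟨b, hb, rfl⟩ w'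
              have hzx : z = x := hT1 hzT
              obtain ⟨t, ht, hft⟩ := hw' z hz
              have htxy : t = x ∨ t = y := by
                by_cases hty : t = y
                · exact Or.inr hty
                · rw [cf_eq_self hty] at hft
                  exact Or.inl (hft.trans hzx)
              refine ⟨t, ht, ?_⟩
              rcases htxy with rfl | rfl <;> simp
            · apply hcard
              obtain ⟨t, htT, htx⟩ : ∃ t ∈ T' \ {y}, t ≠ x := by
                by_contra hcon
                push_neg at hcon
                exact hT1 (fun z hz => hcon z hz)
              calc 2 = ({x, t} : Set V).ncard := (Set.ncard_pair (fun h => htx h.symm)).symm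
                _ ≤ (T' \ {y}).ncard := Set.ncard_le_ncard (by
                      rintro z (rfl | rfl)
                      · exact hxT
                      · exact htT) (Set.toFinite _)
          · apply hcard
            apply hsep
            intro a b ha hb w
            obtain ⟨w', hw'⟩ := projWalk hxy w
            obtain ⟨z, hz, hzT⟩ := hT ⟨a, ha, rfl⟩ ⟨b, hb, rfl⟩ w'
            obtain ⟨t, ht, hft⟩ := hw' z hz
            have hty : t ≠ y := by
              rintro rfl
              rw [cf_y] at hft
              exact hxT (by rw [hft]; exact hzT)
            rw [cf_eq_self hty] at hft
            exact ⟨t, ht, by rw [hft]; exact hzT⟩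
        obtain ⟨a', b', a'', b'', w₁, w₂, ha', hb', ha'', hb'', hdisj⟩ :=
          ih (contractG G x y) (cf x y '' A) (cf x y '' B) hE' hsep'
        obtain ⟨α₁, hα₁, rfl⟩ := ha'
        obtain ⟨β₁, hβ₁, rfl⟩ := hb'
        obtain ⟨α₂, hα₂, rfl⟩ := ha''
        obtain ⟨β₂, hβ₂, rfl⟩ := hb''
        obtain ⟨u₁, hu₁⟩ := liftWalk hxy w₁
        obtain ⟨u₂, hu₂⟩ := liftWalk hxy w₂
        obtain ⟨W₁, hW₁⟩ := fixEnds hxy u₁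
        obtain ⟨W₂, hW₂⟩ := fixEnds hxy u₂
        have lift_mem : ∀ {γ δ : V} (w' : (contractG G x y).Walk (cf x y γ) (cf x y δ))
            (u : G.Walk (cf x y γ) (cf x y δ)) (W : G.Walk γ δ),
            (∀ z ∈ u.support, z ∈ w'.support ∨ (z = y ∧ x ∈ w'.support)) →
            (∀ z ∈ W.support, z ∈ u.support ∨ (z = y ∧ x ∈ u.support)) →
            ∀ z ∈ W.support, z ∈ w'.support ∨ (z = y ∧ x ∈ w'.support) := by
          intro γ δ w' u W hu hW z hz
          rcases hW z hz with h | ⟨rfl, hx⟩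
          · exact hu z h
          · rcases hu x hx with h' | ⟨hxx, _⟩
            · exact Or.inr ⟨rfl, h'⟩
            · exact absurd hxx hxy.ne
        have H₁ := lift_mem w₁ u₁ W₁ hu₁ hW₁
        have H₂ := lift_mem w₂ u₂ W₂ hu₂ hW₂
        refine ⟨α₁, β₁, α₂, β₂, W₁, W₂, hα₁, hβ₁, hα₂, hβ₂, ?_⟩
        intro z hz1 hz2
        rcases H₁ z hz1 with h1 | ⟨hzy, hx1⟩
        · rcases H₂ z hz2 with h2 | ⟨hzy2, hx2⟩
          · exact hdisj z h1 h2
          · exact contract_support_ne_y w₁ (cf_ne_y hxy.ne α₁) z h1 hzy2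
        · rcases H₂ z hz2 with h2 | ⟨-, hx2⟩
          · exact contract_support_ne_y w₂ (cf_ne_y hxy.ne α₂) z h2 hzy
          · exact hdisj x hx1 hx2


def delV (G : SimpleGraph V) (u : V) : SimpleGraph V where
  Adj a b := G.Adj a b ∧ a ≠ u ∧ b ≠ u
  symm := ⟨fun a b ⟨h, ha, hb⟩ => ⟨h.symm, hb, ha⟩⟩
  loopless := ⟨fun a ⟨h, _, _⟩ => G.loopless.irrefl a h⟩

lemma delV_le {G : SimpleGraph V} {u : V} : delV G u ≤ G := fun _ _ h => h.1

lemma delV_support_ne {G : SimpleGraph V} {u : V} :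
    ∀ {a b : V} (w : (delV G u).Walk a b), a ≠ u → ∀ z ∈ w.support, z ≠ u := by
  intro a b w
  induction w with
  | nil => intro ha z hz; simp only [Walk.support_nil, List.mem_singleton] at hz; exact hz ▸ ha
  | @cons a c b hadj p ih =>
    intro ha z hz
    rcases List.mem_cons.1 (by simpa [Walk.support_cons] using hz) with rfl | hz'
    · exact ha
    · exact ih hadj.2.2 z hz'

lemma toDelV {G : SimpleGraph V} {u : V} :
    ∀ {a b : V} (w : G.Walk a b), (∀ z ∈ w.support, z ≠ u) →
      ∃ w' : (delV G u).Walk a b, w'.support = w.support := by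
  intro a b w
  induction w with
  | nil => intro _; exact ⟨Walk.nil, rfl⟩
  | @cons a c b hadj p ih =>
    intro hne
    obtain ⟨w', hw'⟩ := ih (fun z hz => hne z (by simp [Walk.support_cons, hz]))
    have hadj' : (delV G u).Adj a c :=
      ⟨hadj, hne a (by simp [Walk.support_cons]), hne c (by simp [Walk.support_cons])⟩
    exact ⟨Walk.cons hadj' w', by simp [Walk.support_cons, hw']⟩

lemma induceToG {G : SimpleGraph V} {S : Set V} :
    ∀ {s t : S} (w : (G.induce S).Walk s t),
      ∃ w' : G.Walk s.val t.val, ∀ z ∈ w'.support, z ∈ S := by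
  intro s t w
  induction w with
  | nil =>
    refine ⟨Walk.nil, ?_⟩
    intro z hz
    simp only [Walk.support_nil, List.mem_singleton] at hz
    subst hz
    exact Subtype.prop _
  | @cons a c b hadj p ih =>
    obtain ⟨w', hw'⟩ := ih
    refine ⟨Walk.cons (show G.Adj a.val c.val from hadj) w', ?_⟩
    intro z hz
    rcases List.mem_cons.1 (by rwa [Walk.support_cons] at hz) with rfl | hz'
    · exact a.2
    · exact hw' z hz'

lemma reach3 {G : SimpleGraph V} (hG : ThreeConnected G) {x y s t : V}
    (hsx : s ≠ x) (hsy : s ≠ y) (htx : t ≠ x) (hty : t ≠ y) :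
    ∃ w : G.Walk s t, ∀ z ∈ w.support, z ≠ x ∧ z ≠ y := by
  obtain ⟨w0⟩ := ((hG.2 x y).preconnected ⟨s, hsx, hsy⟩ ⟨t, htx, hty⟩)
  obtain ⟨w', hw'⟩ := induceToG w0
  exact ⟨w', fun z hz => hw' z hz⟩

lemma fan_paths {G : SimpleGraph V} (hG : ThreeConnected G) {u v1 v2 v3 : V}
    (h1 : G.Adj u v1) (h2 : G.Adj u v2) (h3 : G.Adj u v3)
    (h12 : v1 ≠ v2) (h13 : v1 ≠ v3) (h23 : v2 ≠ v3) :
    ∃ (P : G.Walk v1 v2) (Q : G.Walk v2 v3), P.IsPath ∧ Q.IsPath ∧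
      u ∉ P.support ∧ u ∉ Q.support ∧ v3 ∉ P.support ∧ v1 ∉ Q.support ∧
      (∀ z ∈ P.support, z ∈ Q.support → z = v2) := by
  set H := delV G u with hH
  set A : Set V := {z | (delV G u).Adj v2 z} with hA
  have hsep : ∀ S : Set V, MSep H A {v1, v3} S → 2 ≤ S.ncard := by
    intro S hS
    by_contra hlt
    push_neg at hlt
    have hle1 : S.ncard ≤ 1 := by omega
    obtain ⟨s, hSs⟩ : ∃ s : V, S ⊆ {s} := by
      rcases Set.eq_empty_or_nonempty S with rfl | ⟨s0, hs0⟩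
      · exact ⟨u, by simp⟩
      · refine ⟨s0, fun z hz => ?_⟩
        simp only [Set.mem_singleton_iff]
        by_contra hne
        have hsub : ({z, s0} : Set V) ⊆ S := by rintro w (rfl | rfl) <;> assumption
        have := Set.ncard_le_ncard hsub (Set.toFinite _)
        rw [Set.ncard_pair hne] at this
        omega
    by_cases hsv2 : s = v2
    · -- find a neighbour of v2 avoiding u, then walk avoiding u and v2
      obtain ⟨w, hw⟩ := reach3 hG (x := u) (y := u) h2.ne' h2.ne' h1.ne' h1.ne'
      cases w with
      | nil => exact h12 rfl
      | @cons _ a _ hadj p =>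
        have hau : a ≠ u := (hw a (by simp [Walk.support_cons])).1
        obtain ⟨w2, hw2⟩ := reach3 hG (x := u) (y := v2) hau hadj.ne' h1.ne' h12
        obtain ⟨w', hw'⟩ := toDelV w2 (fun z hz => (hw2 z hz).1)
        have haA : a ∈ A := ⟨hadj, h2.ne', hau⟩
        obtain ⟨z, hz, hzS⟩ := hS haA (by simp : v1 ∈ ({v1, v3} : Set V)) w'
        have hzv2 : z = v2 := by
          have := hSs hzS
          simp only [Set.mem_singleton_iff] at this
          rw [this, hsv2]
        rw [hw'] at hz
        exact (hw2 z hz).2 hzv2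
    · -- s ≠ v2
      have hv2s : v2 ≠ s := fun h => hsv2 h.symm
      obtain ⟨t, htB, hts, htv2, htu⟩ : ∃ t, t ∈ ({v1, v3} : Set V) ∧ t ≠ s ∧ t ≠ v2 ∧ t ≠ u := by
        by_cases hv1s : v1 = s
        · exact ⟨v3, by simp, fun h => h13 (hv1s.trans h.symm), Ne.symm h23, h3.ne'⟩
        · exact ⟨v1, by simp, hv1s, h12, h1.ne'⟩
      obtain ⟨w, hw⟩ := reach3 hG (x := u) (y := s) h2.ne' hv2s htu hts
      cases w with
      | nil => exact htv2 rfl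
      | @cons _ a _ hadj p =>
        have hau : a ≠ u := (hw a (by simp [Walk.support_cons])).1
        have hsupp : ∀ z ∈ p.support, z ≠ u ∧ z ≠ s := by
          intro z hz
          exact hw z (by simp [Walk.support_cons, hz])
        obtain ⟨w', hw'⟩ := toDelV p (fun z hz => (hsupp z hz).1)
        have haA : a ∈ A := ⟨hadj, h2.ne', hau⟩
        obtain ⟨z, hz, hzS⟩ := hS haA htB w'
        have hzs := hSs hzS
        simp only [Set.mem_singleton_iff] at hzs
        rw [hw'] at hz
        exact (hsupp z hz).2 hzs
  obtain ⟨a₁, c₁, a₂, c₂, w₁, w₂, ha₁, hc₁, ha₂, hc₂, hdisj⟩ :=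
    menger2 (H.edgeSet.ncard) H A {v1, v3} le_rfl hsep
  -- main continuation
  have main : ∀ {a₁ a₂ : V} (w₁ : H.Walk a₁ v1) (w₂ : H.Walk a₂ v3),
      a₁ ∈ A → a₂ ∈ A → (∀ z, z ∈ w₁.support → z ∉ w₂.support) →
      ∃ (P : G.Walk v1 v2) (Q : G.Walk v2 v3), P.IsPath ∧ Q.IsPath ∧
        u ∉ P.support ∧ u ∉ Q.support ∧ v3 ∉ P.support ∧ v1 ∉ Q.support ∧
        (∀ z ∈ P.support, z ∈ Q.support → z = v2) := by
    clear hdisj hc₁ hc₂ ha₁ ha₂ w₁ w₂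
    intro a₁ a₂ w₁ w₂ ha₁ ha₂ hdisj
    have build : ∀ {a c : V} (w : H.Walk a c), a ∈ A →
        ∃ U : H.Walk v2 c, ∀ z ∈ U.support, z = v2 ∨ z ∈ w.support := by
      intro a c w haA
      by_cases hv : v2 ∈ w.support
      · exact ⟨w.dropUntil v2 hv, fun z hz => Or.inr (w.support_dropUntil_subset hv hz)⟩
      · refine ⟨Walk.cons haA w, ?_⟩
        intro z hz
        rcases List.mem_cons.1 (by simpa [Walk.support_cons] using hz) with rfl | hz'
        · exact Or.inl rfl
        · exact Or.inr hz'
    obtain ⟨U₁, hU₁⟩ := build w₁ ha₁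
    obtain ⟨U₂, hU₂⟩ := build w₂ ha₂
    have hT₁ : ∀ z ∈ U₁.bypass.support, z = v2 ∨ z ∈ w₁.support :=
      fun z hz => hU₁ z (U₁.support_bypass_subset hz)
    have hT₂ : ∀ z ∈ U₂.bypass.support, z = v2 ∨ z ∈ w₂.support :=
      fun z hz => hU₂ z (U₂.support_bypass_subset hz)
    have hHsub : ∀ ⦃x' y' : V⦄ (w : H.Walk x' y'), ∀ e ∈ w.edges, e ∈ G.edgeSet :=
      fun x' y' w e he => edgeSet_mono delV_le (w.edges_subset_edgeSet he)
    have ha₁u : a₁ ≠ u := ha₁.2.2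
    have ha₂u : a₂ ≠ u := ha₂.2.2
    refine ⟨(U₁.bypass.transfer G (hHsub _)).reverse, U₂.bypass.transfer G (hHsub _),
      ((U₁.bypass_isPath).transfer _).reverse, (U₂.bypass_isPath).transfer _, ?_, ?_, ?_, ?_, ?_⟩
    · rw [Walk.support_reverse, List.mem_reverse, Walk.support_transfer]
      intro hu
      rcases hT₁ u hu with h | h
      · exact h2.ne h
      · exact delV_support_ne w₁ (fun hh => ha₁u hh) u h rfl
    · rw [Walk.support_transfer]
      intro hu
      rcases hT₂ u hu with h | h
      · exact h2.ne h
      · exact delV_support_ne w₂ (fun hh => ha₂u hh) u h rfl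
    · rw [Walk.support_reverse, List.mem_reverse, Walk.support_transfer]
      intro hv3
      rcases hT₁ v3 hv3 with h | h
      · exact h23 h.symm
      · exact hdisj v3 h w₂.end_mem_support
    · rw [Walk.support_transfer]
      intro hv1
      rcases hT₂ v1 hv1 with h | h
      · exact h12 h
      · exact hdisj v1 w₁.end_mem_support h
    · intro z hz1 hz2
      rw [Walk.support_reverse, List.mem_reverse, Walk.support_transfer] at hz1
      rw [Walk.support_transfer] at hz2
      rcases hT₁ z hz1 with h | h
      · exact h
      · rcases hT₂ z hz2 with h' | h'
        · exact h'
        · exact absurd h' (hdisj z h)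
  have hc12 : c₁ ≠ c₂ := by
    intro h
    exact hdisj c₁ w₁.end_mem_support (by rw [h]; exact w₂.end_mem_support)
  simp only [Set.mem_insert_iff, Set.mem_singleton_iff] at hc₁ hc₂
  rcases hc₁ with rfl | rfl <;> rcases hc₂ with rfl | rfl
  · exact absurd rfl hc12
  · exact main w₁ w₂ ha₁ ha₂ hdisj
  · exact main w₂ w₁ ha₂ ha₁ (fun z hz hz2 => hdisj z hz2 hz)
  · exact absurd rfl hc12


end OFan

end OrderedFanProof

/-- in a 3-connected graph, any vertex together with three prescribed
neighbours is the center of a subdivided 3-fan visiting them in order. -/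
theorem ordered_fan3_of_threeConnected {V : Type*} (G : SimpleGraph V)
    (hG : ThreeConnected G) (u v1 v2 v3 : V)
    (h1 : G.Adj u v1) (h2 : G.Adj u v2) (h3 : G.Adj u v3)
    (h12 : v1 ≠ v2) (h13 : v1 ≠ v3) (h23 : v2 ≠ v3) :
    ∃ F : FanSubdivision G u 3, F.b 0 = v1 ∧ F.b 1 = v2 ∧ F.b 2 = v3 := by
  classical
  have hcard := hG.1
  have hfin : Finite V := Nat.finite_of_card_ne_zero (by omega)
  letI := Fintype.ofFinite V
  obtain ⟨P, Q, hP, hQ, huP, huQ, h3P, h1Q, hPQ⟩ :=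
    OFan.fan_paths hG h1 h2 h3 h12 h13 h23
  have hv1P : v1 ∈ P.support := P.start_mem_support
  have hv2P : v2 ∈ P.support := P.end_mem_support
  have hv2Q : v2 ∈ Q.support := Q.start_mem_support
  have hv3Q : v3 ∈ Q.support := Q.end_mem_support
  refine ⟨{
    b := fun i => if i.val = 0 then v1 else if i.val = 1 then v2 else v3
    binj := ?_
    bne := ?_
    spoke := fun i =>
      if h0 : i.val = 0 then (Walk.cons h1 Walk.nil).copy rfl (by simp [h0])
      else if h1' : i.val = 1 then (Walk.cons h2 Walk.nil).copy rfl (by simp [h0, h1'])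
      else (Walk.cons h3 Walk.nil).copy rfl (by simp [h0, h1'])
    spokePath := ?_
    seg := fun i h =>
      if h0 : i.val = 0 then P.copy (by simp [h0]) (by simp [h0])
      else if h1' : i.val = 1 then Q.copy (by simp [h0, h1']) (by simp [h1'])
      else False.elim (by omega)
    segPath := ?_
    vNotinSeg := ?_
    spokeDisj := ?_
    spokeSegDisj := ?_
    segDisj := ?_ }, ?_, ?_, ?_⟩
  · intro i j hij
    obtain ⟨iv, hi⟩ := i
    obtain ⟨jv, hj⟩ := j
    interval_cases iv <;> interval_cases jv <;> simp_all
  · intro i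
    obtain ⟨iv, hi⟩ := i
    interval_cases iv <;> simp [h1.ne', h2.ne', h3.ne']
  · intro i
    obtain ⟨iv, hi⟩ := i
    interval_cases iv <;>
      simp [Walk.isPath_copy, Walk.cons_isPath_iff, h1.ne, h2.ne, h3.ne]
  · intro i h
    obtain ⟨iv, hi⟩ := i
    interval_cases iv
    · simp [Walk.isPath_copy, hP]
    · simp [Walk.isPath_copy, hQ]
    · simp at h
  · intro i h
    obtain ⟨iv, hi⟩ := i
    interval_cases iv
    · simp [Walk.support_copy, huP]
    · simp [Walk.support_copy, huQ]
    · simp at h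
  · intro i j hij
    obtain ⟨iv, hi⟩ := i
    obtain ⟨jv, hj⟩ := j
    interval_cases iv <;> interval_cases jv <;> simp_all <;>
      · ext z
        simp only [Set.mem_inter_iff, Set.mem_setOf_eq, Walk.support_copy, Walk.support_cons,
          Walk.support_nil, List.mem_cons, List.mem_singleton, Set.mem_singleton_iff]
        constructor
        · rintro ⟨rfl | rfl, h2' | h2'⟩ <;> first | rfl | (exfalso; simp_all)
        · rintro rfl; exact ⟨Or.inl rfl, Or.inl rfl⟩
  · intro i j h
    obtain ⟨iv, hi⟩ := i
    obtain ⟨jv, hj⟩ := j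
    interval_cases jv
    · interval_cases iv <;>
        (intro z hz
         simp only [Set.mem_inter_iff, Set.mem_setOf_eq] at hz
         obtain ⟨hz1, hz2⟩ := hz
         simp at hz1 hz2 ⊢
         rcases hz1 with rfl | rfl <;> simp_all)
    · interval_cases iv <;>
        (intro z hz
         simp only [Set.mem_inter_iff, Set.mem_setOf_eq] at hz
         obtain ⟨hz1, hz2⟩ := hz
         simp at hz1 hz2 ⊢
         rcases hz1 with rfl | rfl <;> simp_all)
    · exact absurd h (by simp)
  · intro i j hi hj hij
    obtain ⟨iv, hi'⟩ := i
    obtain ⟨jv, hj'⟩ := j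
    interval_cases iv
    · interval_cases jv
      · exact absurd rfl hij
      · intro z hz
        simp only [Set.mem_inter_iff, Set.mem_setOf_eq] at hz
        obtain ⟨hz1, hz2⟩ := hz
        simp at hz1 hz2
        have hv := hPQ z hz1 hz2
        subst hv
        simp
      · exact absurd hj (by simp)
    · interval_cases jv
      · intro z hz
        simp only [Set.mem_inter_iff, Set.mem_setOf_eq] at hz
        obtain ⟨hz1, hz2⟩ := hz
        simp at hz1 hz2
        have hv := hPQ z hz2 hz1
        subst hv
        simp
      · exact absurd rfl hij
      · exact absurd hj (by simp)
    · exact absurd hi (by simp)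
  · simp
  · simp
  · simp
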